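/- Let D be a triangulated category, E ⊆ D an admissible subcategory, and (G, F) an adjoint pair of exact endofunctors such that F acts on E as an equivalence and nilpotently on E^⊥. For a natural number a, F^a(D) ⊆ E if and only if G^a(D) ⊆ E, and this holds if and only if G^a(^⊥E) = 0. -/

import Mathlib

/-!
Let `D` be a triangulated category, `E ⊆ D` an admissible subcategory, and `(G, F)` an
adjoint pair of exact endofunctors such that `F` acts on `E` as an equivalence and
nilpotently on `E^⊥`.  For a natural number `a`, `F^a(D) ⊆ E` if and only if
`G^a(D) ⊆ E`, and this holds if and only if `G^a(^⊥E) = 0`.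
-/

open CategoryTheory Limits CategoryTheory.Pretriangulated

namespace Stmt7

universe v u

variable {D : Type u} [Category.{v} D] [Preadditive D] [HasZeroObject D]
  [HasShift D ℤ] [∀ n : ℤ, (CategoryTheory.shiftFunctor D n).Additive] [Pretriangulated D]

/-- Iterated composition of an endofunctor. -/
def iter (F : D ⥤ D) : ℕ → D ⥤ D
  | 0 => 𝟭 D
  | n + 1 => iter F n ⋙ F

/-- The right orthogonal of a class of objects. -/
def rOrth (P : D → Prop) : D → Prop := fun d => ∀ e : D, P e → ∀ f : e ⟶ d, f = 0

/-- The left orthogonal of a class of objects. -/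
def lOrth (P : D → Prop) : D → Prop := fun d => ∀ e : D, P e → ∀ f : d ⟶ e, f = 0

lemma iter_succ_eq (F : D ⥤ D) : ∀ n : ℕ, F ⋙ iter F n = iter F (n + 1)
  | 0 => rfl
  | n + 1 => by
      show F ⋙ (iter F n ⋙ F) = iter F (n + 1) ⋙ F
      rw [← Functor.assoc, iter_succ_eq F n]

/-- The iterated adjunction `G^n ⊣ F^n`. -/
def iterAdj {F G : D ⥤ D} (adj : G ⊣ F) : ∀ n : ℕ, iter G n ⊣ iter F n
  | 0 => Adjunction.id
  | n + 1 => ((iterAdj adj n).comp adj).ofNatIsoRight (eqToIso (iter_succ_eq F n))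

lemma iter_map_zero (F : D ⥤ D) [F.Additive] :
    ∀ (n : ℕ) (X Y : D), (iter F n).map (0 : X ⟶ Y) = 0
  | 0, _, _ => rfl
  | n + 1, X, Y => by
      show F.map ((iter F n).map (0 : X ⟶ Y)) = 0
      rw [iter_map_zero F n, F.map_zero]

section MemCriteria

variable (P : D → Prop)

/-- An object receiving no nonzero maps from `^⊥E` lies in `E`. -/
lemma mem_of_lOrth_zero
    (hP_shift : ∀ (X : D) (n : ℤ), P X → P (X⟦n⟧))
    (hP_retract : ∀ (X Z : D), P Z → ∀ (i : X ⟶ Z) (r : Z ⟶ X), i ≫ r = 𝟙 X → P X)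
    (hadm : (ObjectProperty.ι P).IsRightAdjoint)
    (X : D) (hX : ∀ c : D, lOrth P c → ∀ f : c ⟶ X, f = 0) : P X := by
  obtain ⟨L, ⟨adjL⟩⟩ := hadm.exists_leftAdjoint
  set ι := ObjectProperty.ι P with hι
  set η : X ⟶ ι.obj (L.obj X) := adjL.unit.app X with hη
  obtain ⟨c, f₀, δ, hT⟩ := Pretriangulated.distinguished_cocone_triangle₁ η
  -- surjectivity of precomposition with η on maps into E
  have surjL : ∀ (e : D), P e → ∀ v : X ⟶ e,
      ∃ u : ι.obj (L.obj X) ⟶ e, η ≫ u = v := by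
    intro e he v
    have h1 : adjL.homEquiv X ⟨e, he⟩ ((adjL.homEquiv X ⟨e, he⟩).symm v) = v :=
      Equiv.apply_symm_apply _ _
    rw [adjL.homEquiv_unit] at h1
    exact ⟨ι.map ((adjL.homEquiv X ⟨e, he⟩).symm v), h1⟩
  -- injectivity of precomposition with η on maps into E
  have injL : ∀ (e : D), P e → ∀ u : ι.obj (L.obj X) ⟶ e, η ≫ u = 0 → u = 0 := by
    intro e he u hu
    have h1 : adjL.homEquiv X ⟨e, he⟩ (ObjectProperty.homMk u) = 0 := by
      rw [adjL.homEquiv_unit]; exact hu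
    have h2 : adjL.homEquiv X ⟨e, he⟩ 0 = 0 := by
      rw [adjL.homEquiv_unit]
      show η ≫ (0 : ι.obj (L.obj X) ⟶ e) = 0
      rw [comp_zero]
    exact congrArg InducedCategory.Hom.hom ((adjL.homEquiv X ⟨e, he⟩).injective (h1.trans h2.symm))
  -- the cone `c` lies in the left orthogonal
  have hc : lOrth P c := by
    intro e he φ
    have hδφ : δ ≫ (shiftFunctor D (1 : ℤ)).map φ = 0 := by
      apply injL _ (hP_shift e 1 he)
      rw [← Category.assoc]
      have := Pretriangulated.comp_distTriang_mor_zero₂₃ _ hT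
      change η ≫ δ = 0 at this
      rw [this, zero_comp]
    have hTrot := Pretriangulated.rot_of_distTriang _ hT
    obtain ⟨g, hg⟩ := Pretriangulated.Triangle.yoneda_exact₃ _ hTrot
      ((shiftFunctor D (1 : ℤ)).map φ) (by exact hδφ)
    change (shiftFunctor D (1 : ℤ)).map φ = (-(shiftFunctor D (1 : ℤ)).map f₀) ≫ g at hg
    obtain ⟨g₀, rfl⟩ := (shiftFunctor D (1 : ℤ)).map_surjective g
    obtain ⟨u, hu⟩ := surjL e he g₀
    apply (shiftFunctor D (1 : ℤ)).map_injective
    rw [hg, ← hu, Functor.map_zero]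
    have h12 := Pretriangulated.comp_distTriang_mor_zero₁₂ _ hT
    change f₀ ≫ η = 0 at h12
    have hz : (shiftFunctor D (1 : ℤ)).map f₀ ≫ (shiftFunctor D (1 : ℤ)).map (η ≫ u) = 0 := by
      rw [← Functor.map_comp, ← Category.assoc, h12, zero_comp, Functor.map_zero]
    change (-(shiftFunctor D (1 : ℤ)).map f₀) ≫ (shiftFunctor D (1 : ℤ)).map (η ≫ u) = 0
    rw [Preadditive.neg_comp, hz, neg_zero]
  -- conclude that `X` is a retract of `ι (L X)`
  have hf₀ : f₀ = 0 := hX c hc f₀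
  obtain ⟨g, hg⟩ := Pretriangulated.Triangle.yoneda_exact₂ _ hT (𝟙 X)
    (by change f₀ ≫ 𝟙 X = 0; rw [hf₀, zero_comp])
  change 𝟙 X = η ≫ g at hg
  exact hP_retract X (ι.obj (L.obj X)) (L.obj X).2 η g hg.symm

/-- An object admitting no nonzero maps to `E^⊥` lies in `E`. -/
lemma mem_of_rOrth_zero
    (hP_shift : ∀ (X : D) (n : ℤ), P X → P (X⟦n⟧))
    (hP_retract : ∀ (X Z : D), P Z → ∀ (i : X ⟶ Z) (r : Z ⟶ X), i ≫ r = 𝟙 X → P X)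
    (hadm : (ObjectProperty.ι P).IsLeftAdjoint)
    (X : D) (hX : ∀ p : D, rOrth P p → ∀ f : X ⟶ p, f = 0) : P X := by
  obtain ⟨R, ⟨adjR⟩⟩ := hadm.exists_rightAdjoint
  set ι := ObjectProperty.ι P with hι
  set ε : ι.obj (R.obj X) ⟶ X := adjR.counit.app X with hε
  obtain ⟨p, h, δ, hT⟩ := Pretriangulated.distinguished_cocone_triangle ε
  -- surjectivity of postcomposition with ε on maps from E
  have surjR : ∀ (e : D), P e → ∀ v : e ⟶ X,
      ∃ u : e ⟶ ι.obj (R.obj X), u ≫ ε = v := by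
    intro e he v
    have h1 : (adjR.homEquiv ⟨e, he⟩ X).symm (adjR.homEquiv ⟨e, he⟩ X v) = v :=
      Equiv.symm_apply_apply _ _
    rw [adjR.homEquiv_counit] at h1
    exact ⟨ι.map (adjR.homEquiv ⟨e, he⟩ X v), h1⟩
  -- injectivity of postcomposition with ε on maps from E
  have injR : ∀ (e : D), P e → ∀ u : e ⟶ ι.obj (R.obj X), u ≫ ε = 0 → u = 0 := by
    intro e he u hu
    have h1 : (adjR.homEquiv ⟨e, he⟩ X).symm (ObjectProperty.homMk u) = 0 := by
      rw [adjR.homEquiv_counit]; exact hu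
    have h2 : (adjR.homEquiv ⟨e, he⟩ X).symm 0 = 0 := by
      rw [adjR.homEquiv_counit]
      show (0 : e ⟶ ι.obj (R.obj X)) ≫ ε = 0
      rw [zero_comp]
    exact congrArg InducedCategory.Hom.hom ((adjR.homEquiv ⟨e, he⟩ X).symm.injective (h1.trans h2.symm))
  -- the cone `p` lies in the right orthogonal
  have hp : rOrth P p := by
    intro e he f
    have hfδ : f ≫ δ = 0 := by
      set adjS := (shiftEquiv' D (-1 : ℤ) (1 : ℤ) (by ring)).toAdjunction with hadjS
      have h0 : (f ≫ δ) ≫ (shiftFunctor D (1 : ℤ)).map ε = 0 := by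
        have := Pretriangulated.comp_distTriang_mor_zero₃₁ _ hT
        change δ ≫ (shiftFunctor D (1 : ℤ)).map ε = 0 at this
        rw [Category.assoc, this, comp_zero]
      have h1 := adjS.homEquiv_naturality_right_symm (f ≫ δ) ε
      erw [h0] at h1
      have h2 : (adjS.homEquiv e X).symm 0 = 0 := by
        rw [adjS.homEquiv_counit]
        erw [(shiftFunctor D (-1 : ℤ)).map_zero, zero_comp]
      have h4 := h1.symm.trans h2
      have h5 : (adjS.homEquiv e (ι.obj (R.obj X))).symm (f ≫ δ) = 0 :=
        injR _ (hP_shift e (-1) he) _ h4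
      have h6 : f ≫ δ =
          adjS.homEquiv e (ι.obj (R.obj X))
            ((adjS.homEquiv e (ι.obj (R.obj X))).symm (f ≫ δ)) :=
        (Equiv.apply_symm_apply _ _).symm
      rw [h5, adjS.homEquiv_unit] at h6
      erw [(shiftFunctor D (1 : ℤ)).map_zero, comp_zero] at h6
      exact h6
    obtain ⟨g, hg⟩ := Pretriangulated.Triangle.coyoneda_exact₃ _ hT f (by exact hfδ)
    change f = g ≫ h at hg
    obtain ⟨u, hu⟩ := surjR e he g
    have h12 := Pretriangulated.comp_distTriang_mor_zero₁₂ _ hT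
    change ε ≫ h = 0 at h12
    rw [hg, ← hu]
    change (u ≫ ε) ≫ h = 0
    rw [Category.assoc, h12, comp_zero]
  -- conclude that `X` is a retract of `ι (R X)`
  have hh : h = 0 := hX p hp h
  obtain ⟨s, hs⟩ := Pretriangulated.Triangle.coyoneda_exact₂ _ hT (𝟙 X)
    (by change 𝟙 X ≫ h = 0; rw [hh, comp_zero])
  change 𝟙 X = s ≫ ε at hs
  exact hP_retract X (ι.obj (R.obj X)) (R.obj X).2 s ε hs.symm

end MemCriteria

theorem power_in_E_iff_left_adjoint_power_in_E
    (P : D → Prop)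
    -- `E` is a thick subcategory:
    (hP_iso : ∀ {X Y : D}, (X ≅ Y) → P X → P Y)
    (hP_shift : ∀ (X : D) (n : ℤ), P X → P (X⟦n⟧))
    (hP_tri : ∀ T ∈ distTriang D, P T.obj₁ → P T.obj₂ → P T.obj₃)
    (hP_retract : ∀ (X Z : D), P Z → ∀ (i : X ⟶ Z) (r : Z ⟶ X), i ≫ r = 𝟙 X → P X)
    -- `E` is admissible:
    (_hadm_right : (ObjectProperty.ι P).IsLeftAdjoint)
    (_hadm_left : (ObjectProperty.ι P).IsRightAdjoint)
    -- `(G, F)` an adjoint pair of exact endofunctors: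
    (F G : D ⥤ D) [F.CommShift ℤ] [F.IsTriangulated] [G.CommShift ℤ] [G.IsTriangulated]
    (adj : G ⊣ F)
    -- `F` restricts to an autoequivalence of `E`:
    (hFP : ∀ d : D, P d → P (F.obj d))
    (hFE : (ObjectProperty.lift P (ObjectProperty.ι P ⋙ F)
      (fun X => hFP X.1 X.2)).IsEquivalence)
    -- `F` acts nilpotently on `E^⊥`:
    (hFperp : ∀ d : D, rOrth P d → rOrth P (F.obj d))
    (hnilp : ∃ b : ℕ, ∀ d : D, rOrth P d → IsZero ((iter F b).obj d))
    (a : ℕ) :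
    ((∀ d : D, P ((iter F a).obj d)) ↔ (∀ d : D, P ((iter G a).obj d))) ∧
      ((∀ d : D, P ((iter F a).obj d)) ↔
        (∀ d : D, lOrth P d → IsZero ((iter G a).obj d))) := by
  set A := iterAdj adj a with hA
  -- the hom-equivalence of the iterated adjunction sends 0 to 0
  have hAz : ∀ (X Y : D), A.homEquiv X Y 0 = 0 := by
    intro X Y
    rw [A.homEquiv_unit, iter_map_zero, comp_zero]
  have hAz' : ∀ (X Y : D), (A.homEquiv X Y).symm 0 = 0 := by
    intro X Y
    rw [A.homEquiv_counit, iter_map_zero, zero_comp]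
  -- iterates of F preserve the right orthogonal
  have hFperp_iter : ∀ (n : ℕ) (d : D), rOrth P d → rOrth P ((iter F n).obj d) := by
    intro n
    induction n with
    | zero => exact fun d hd => hd
    | succ n ih => exact fun d hd => hFperp _ (ih d hd)
  -- G preserves the left orthogonal
  have hGl : ∀ d : D, lOrth P d → lOrth P (G.obj d) := by
    intro d hd e he f
    have h1 : adj.homEquiv d e f = 0 := hd (F.obj e) (hFP e he) _
    have h2 : f = (adj.homEquiv d e).symm (adj.homEquiv d e f) :=
      (Equiv.symm_apply_apply _ _).symm
    rw [h1, adj.homEquiv_counit, Functor.map_zero, zero_comp] at h2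
    exact h2
  have hGl_iter : ∀ (n : ℕ) (d : D), lOrth P d → lOrth P ((iter G n).obj d) := by
    intro n
    induction n with
    | zero => exact fun d hd => hd
    | succ n ih => exact fun d hd => hGl _ (ih d hd)
  -- (1) → (3)
  have h13 : (∀ d : D, P ((iter F a).obj d)) →
      ∀ d : D, lOrth P d → IsZero ((iter G a).obj d) := by
    intro h1 d hd
    rw [IsZero.iff_id_eq_zero]
    have h2 : A.homEquiv d ((iter G a).obj d) (𝟙 _) = 0 :=
      hd _ (h1 ((iter G a).obj d)) _
    have h3 : 𝟙 ((iter G a).obj d) =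
        (A.homEquiv d ((iter G a).obj d)).symm (A.homEquiv d ((iter G a).obj d) (𝟙 _)) :=
      (Equiv.symm_apply_apply _ _).symm
    rw [h2, hAz'] at h3
    exact h3
  -- (3) → (1)
  have h31 : (∀ d : D, lOrth P d → IsZero ((iter G a).obj d)) →
      ∀ d : D, P ((iter F a).obj d) := by
    intro h3 d
    apply mem_of_lOrth_zero P hP_shift hP_retract _hadm_left
    intro c hc f
    have h1 : (A.homEquiv c d).symm f = 0 := (h3 c hc).eq_of_src _ _
    have h2 : f = A.homEquiv c d ((A.homEquiv c d).symm f) :=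
      (Equiv.apply_symm_apply _ _).symm
    rw [h1, hAz] at h2
    exact h2
  -- (1) → (2)
  have h12 : (∀ d : D, P ((iter F a).obj d)) → ∀ d : D, P ((iter G a).obj d) := by
    intro h1 d
    apply mem_of_rOrth_zero P hP_shift hP_retract _hadm_right
    intro p hp f
    have hzp : IsZero ((iter F a).obj p) := by
      rw [IsZero.iff_id_eq_zero]
      exact hFperp_iter a p hp _ (h1 p) (𝟙 _)
    have h2 : A.homEquiv d p f = 0 := hzp.eq_of_tgt _ _
    have h3 : f = (A.homEquiv d p).symm (A.homEquiv d p f) :=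
      (Equiv.symm_apply_apply _ _).symm
    rw [h2, hAz'] at h3
    exact h3
  -- (2) → (3)
  have h23 : (∀ d : D, P ((iter G a).obj d)) →
      ∀ d : D, lOrth P d → IsZero ((iter G a).obj d) := by
    intro h2 d hd
    rw [IsZero.iff_id_eq_zero]
    exact hGl_iter a d hd _ (h2 d) (𝟙 _)
  exact ⟨⟨h12, fun h2 => h31 (h23 h2)⟩, ⟨h13, h31⟩⟩

end Stmt7
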